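/- Let (Y,Z) be a dual pair of real vector spaces, A ⊆ Y a weakly closed convex set containing zero, and C ⊆ Y a weakly closed cone. Then the one-sided polar of A ∩ C equals the weak*-closure of A° + C°: (A ∩ C)° = cl(A° + C°). -/

import Mathlib

open Pointwise

section Aux

variable {Y Z : Type*} [AddCommGroup Y] [Module ℝ Y] [AddCommGroup Z] [Module ℝ Z]

/-- Every continuous linear functional on `WeakBilin B` is represented by some `z : Z`. -/
theorem weak_dual_rep (B : Y →ₗ[ℝ] Z →ₗ[ℝ] ℝ) (f : WeakBilin B →L[ℝ] ℝ) :
    ∃ z : Z, ∀ y : Y, f y = B y z := by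
  have : Nonempty Z := ⟨0⟩
  have hq : Continuous ((f : WeakBilin B →ₗ[ℝ] ℝ).toSeminorm : WeakBilin B → ℝ) := by
    simpa [LinearMap.coe_toSeminorm] using f.continuous.norm
  obtain ⟨s, C, -, hle⟩ :=
    Seminorm.bound_of_continuous (B.weakBilin_withSeminorms) _ hq
  set L : s → (Y →ₗ[ℝ] ℝ) := fun z => B.flip (z : Z) with hL
  have hker : ⨅ i, LinearMap.ker (L i) ≤ LinearMap.ker (f : WeakBilin B →ₗ[ℝ] ℝ) := by
    intro y hy
    simp only [Submodule.mem_iInf, LinearMap.mem_ker] at hy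
    have hsup : (s.sup (B.toSeminormFamily : Z → Seminorm ℝ (WeakBilin B))) y = 0 := by
      have h1 : (s.sup B.toSeminormFamily) y ≤ 0 :=
        Seminorm.finset_sup_apply_le le_rfl (fun z hz => by
          simpa [LinearMap.toSeminormFamily_apply, hL] using hy ⟨z, hz⟩)
      exact le_antisymm h1 (apply_nonneg _ _)
    have h2 : ‖f y‖ ≤ 0 := by
      calc ‖f y‖ = (f : WeakBilin B →ₗ[ℝ] ℝ).toSeminorm y := rfl
        _ ≤ (C • s.sup B.toSeminormFamily) y := hle y
        _ = C • ((s.sup (B.toSeminormFamily : Z → Seminorm ℝ (WeakBilin B))) y) := rfl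
        _ = 0 := by rw [hsup, smul_zero]
    exact (LinearMap.mem_ker (f := (f : WeakBilin B →ₗ[ℝ] ℝ))).mpr (norm_le_zero_iff.mp h2)
  have hspan := mem_span_of_iInf_ker_le_ker hker
  obtain ⟨c, hc⟩ := (Submodule.mem_span_range_iff_exists_fun ℝ).1 hspan
  refine ⟨∑ i, c i • (i : Z), fun y => ?_⟩
  have : (∑ i, c i • L i) y = f y := by rw [hc]; rfl
  rw [← this]
  simp only [LinearMap.sum_apply, LinearMap.smul_apply, hL, map_sum, map_smul]
  rfl

/-- One-sided bipolar theorem: for a weakly closed convex set containing `0`,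
the one-sided bipolar recovers the set. -/
theorem onesided_bipolar (B : Y →ₗ[ℝ] Z →ₗ[ℝ] ℝ) {S : Set Y}
    (hcl : IsClosed (X := WeakBilin B) S) (hconv : Convex ℝ S) (h0 : (0 : Y) ∈ S) :
    {y : Y | ∀ z ∈ {z : Z | ∀ y' ∈ S, B y' z ≤ 1}, B y z ≤ 1} = S := by
  ext y₀
  constructor
  · intro h
    by_contra hy₀
    obtain ⟨f, u, hfS, hfy⟩ :=
      geometric_hahn_banach_closed_point (E := WeakBilin B) hconv hcl hy₀
    obtain ⟨z, hz⟩ := weak_dual_rep B f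
    have hu : 0 < u := by
      have := hfS 0 h0
      rwa [map_zero] at this
    have hz' : u⁻¹ • z ∈ {z : Z | ∀ y' ∈ S, B y' z ≤ 1} := by
      intro y' hy'
      have h1 : B y' z < u := by rw [← hz y']; exact hfS y' hy'
      have : (B y') (u⁻¹ • z) = u⁻¹ * B y' z := by
        rw [map_smul, smul_eq_mul]
      rw [this]
      rw [inv_mul_le_iff₀ hu, mul_one]
      exact h1.le
    have hcontr := h _ hz'
    have h2 : u < B y₀ z := by rw [← hz y₀]; exact hfy
    have : (B y₀) (u⁻¹ • z) = u⁻¹ * B y₀ z := by rw [map_smul, smul_eq_mul]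
    rw [this, inv_mul_le_iff₀ hu, mul_one] at hcontr
    exact absurd hcontr (not_le.mpr h2)
  · intro hS z hz
    exact hz y₀ hS

/-- One-sided polars are convex. -/
theorem onesided_polar_convex (B : Y →ₗ[ℝ] Z →ₗ[ℝ] ℝ) (S : Set Y) :
    Convex ℝ {z : Z | ∀ y ∈ S, B y z ≤ 1} := by
  intro z₁ hz₁ z₂ hz₂ a b ha hb hab y hy
  have : (B y) (a • z₁ + b • z₂) = a * B y z₁ + b * B y z₂ := by
    rw [map_add, map_smul, map_smul, smul_eq_mul, smul_eq_mul]
  rw [this]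
  calc a * B y z₁ + b * B y z₂ ≤ a * 1 + b * 1 := by
        gcongr
        · exact hz₁ y hy
        · exact hz₂ y hy
    _ = 1 := by rw [mul_one, mul_one, hab]

end Aux

/-- In a dual pair `(Y,Z)`, if `A ⊆ Y` is weakly closed, convex and contains
zero, and `C ⊆ Y` is a weakly closed cone, then `(A ∩ C)° = cl(A° + C°)` (weak*-closure). -/
theorem onesided_polar_inter_cone
    {Y Z : Type*} [AddCommGroup Y] [Module ℝ Y] [AddCommGroup Z] [Module ℝ Z]
    (B : Y →ₗ[ℝ] Z →ₗ[ℝ] ℝ)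
    (hsepY : ∀ y : Y, (∀ z : Z, B y z = 0) → y = 0)
    (hsepZ : ∀ z : Z, (∀ y : Y, B y z = 0) → z = 0)
    (A C : Set Y)
    (hAclosed : IsClosed (X := WeakBilin B) A) (hAconv : Convex ℝ A)
    (hA0 : (0 : Y) ∈ A)
    (hCclosed : IsClosed (X := WeakBilin B) C) (hCne : C.Nonempty)
    (hCadd : C + C ⊆ C) (hCsmul : ∀ l : ℝ, 0 ≤ l → l • C ⊆ C) :
    {z : Z | ∀ y ∈ A ∩ C, B y z ≤ 1} =
      closure (X := WeakBilin B.flip)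
        ({z : Z | ∀ y ∈ A, B y z ≤ 1} + {z : Z | ∀ y ∈ C, B y z ≤ 1}) := by
  -- basic cone facts
  have hC0 : (0 : Y) ∈ C := by
    obtain ⟨c, hc⟩ := hCne
    have := hCsmul 0 le_rfl (Set.smul_mem_smul_set (a := (0 : ℝ)) hc)
    rwa [zero_smul] at this
  have hCconv : Convex ℝ C := by
    intro x hx y hy a b ha hb _
    exact hCadd (Set.add_mem_add (hCsmul a ha (Set.smul_mem_smul_set hx))
      (hCsmul b hb (Set.smul_mem_smul_set hy)))
  set Ap := {z : Z | ∀ y ∈ A, B y z ≤ 1} with hAp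
  set Cp := {z : Z | ∀ y ∈ C, B y z ≤ 1} with hCp
  -- elements of the polar of a cone pair nonpositively
  have hCp_nonpos : ∀ z ∈ Cp, ∀ y ∈ C, B y z ≤ 0 := by
    intro z hz y hy
    by_contra hpos
    push_neg at hpos
    have h2 : (2 / B y z) • y ∈ C :=
      hCsmul _ (by positivity) (Set.smul_mem_smul_set hy)
    have := hz _ h2
    rw [map_smul, LinearMap.smul_apply, smul_eq_mul, div_mul_cancel₀ 2 hpos.ne'] at this
    linarith
  have hA0p : (0 : Z) ∈ Ap := fun y _ => by simp
  have hC0p : (0 : Z) ∈ Cp := fun y _ => by simp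
  apply Set.Subset.antisymm
  · -- hard direction: (A ∩ C)° ⊆ closure (A° + C°)
    intro z₀ hz₀
    set D := closure (X := WeakBilin B.flip) (Ap + Cp) with hD
    have hDclosed : IsClosed (X := WeakBilin B.flip) D := isClosed_closure
    have hDconv : Convex ℝ D :=
      ((onesided_polar_convex B A).add (onesided_polar_convex B C)).closure
        (𝕜 := ℝ) (E := WeakBilin B.flip)
    have hD0 : (0 : Z) ∈ D := subset_closure (X := WeakBilin B.flip) (show (0 : Z) ∈ Ap + Cp by simpa using Set.add_mem_add hA0p hC0p)
    have hbip := onesided_bipolar B.flip hDclosed hDconv hD0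
    rw [← hbip]
    intro y hy
    -- `y` pairs ≤ 1 with everything in `D`, in particular with `Ap` and `Cp`
    have hApD : Ap ⊆ D := fun z hz => subset_closure (X := WeakBilin B.flip)
      (show z ∈ Ap + Cp by simpa using Set.add_mem_add hz hC0p)
    have hCpD : Cp ⊆ D := fun z hz => subset_closure (X := WeakBilin B.flip)
      (show z ∈ Ap + Cp by simpa using Set.add_mem_add hA0p hz)
    have hyA : y ∈ A := by
      rw [← onesided_bipolar B hAclosed hAconv hA0]
      exact fun z hz => hy z (hApD hz)
    have hyC : y ∈ C := by
      rw [← onesided_bipolar B hCclosed hCconv hC0]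
      exact fun z hz => hy z (hCpD hz)
    exact hz₀ y ⟨hyA, hyC⟩
  · -- easy direction: closure (A° + C°) ⊆ (A ∩ C)°
    have hsub : Ap + Cp ⊆ {z : Z | ∀ y ∈ A ∩ C, B y z ≤ 1} := by
      rintro z ⟨z₁, hz₁, z₂, hz₂, rfl⟩ y ⟨hyA, hyC⟩
      have h1 : B y z₁ ≤ 1 := hz₁ y hyA
      have h2 : B y z₂ ≤ 0 := hCp_nonpos z₂ hz₂ y hyC
      rw [map_add]
      linarith
    have hclosed : IsClosed (X := WeakBilin B.flip) {z : Z | ∀ y ∈ A ∩ C, B y z ≤ 1} := by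
      have heq : {z : Z | ∀ y ∈ A ∩ C, B y z ≤ 1} =
          ⋂ y ∈ A ∩ C, {z : Z | B y z ≤ 1} := by
        ext z; simp
      refine (congrArg (IsClosed (X := WeakBilin B.flip)) heq).mpr ?_
      refine isClosed_biInter fun y _ => ?_
      exact IsClosed.preimage (WeakBilin.eval_continuous B.flip y) isClosed_Iic
    exact closure_minimal hsub hclosed
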